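/- Let X be a δ-hyperbolic geodesic metric space, let f ∈ Isom(X) be a hyperbolic isometry with attracting fixed point A_+ and repelling fixed point A_- in ∂X, and let g ∈ Isom(X) fix a point p ∈ X and satisfy g A_- = A_-. Let D ≥ 0 be a constant with (f^{−k} p · f^{k} p)_p ≤ D for all k ∈ ℕ (such D exists since A_+ ≠ A_-). Then for every n ∈ ℤ there is a constant K_n ≥ 0 such that (g^n f^{−k} p · f^{k} p)_p ≤ D + δ and (f^{−k} p · g^n f^{k} p)_p ≤ D + δ for all k ≥ K_n. -/

import Mathlib

open Filter Metric Set

noncomputable section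

universe u

variable {X : Type u} [MetricSpace X]

/-- The Gromov product `(x·y)_w = ½(d(x,w) + d(w,y) − d(x,y))`. -/
def gromovProduct (w x y : X) : ℝ := (dist x w + dist w y - dist x y) / 2

/-- `γ` is a geodesic from `x` to `y`, parametrized by arc length on `[0, dist x y]`. -/
structure IsGeodesicSegment (γ : ℝ → X) (x y : X) : Prop where
  source : γ 0 = x
  target : γ (dist x y) = y
  isom : ∀ ⦃s t : ℝ⦄, s ∈ Set.Icc (0 : ℝ) (dist x y) → t ∈ Set.Icc (0 : ℝ) (dist x y) →
    dist (γ s) (γ t) = |s - t|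

/-- A geodesic metric space is `δ`-hyperbolic: every pair of points is joined by a
geodesic, every geodesic triangle is `δ`-slim, every geodesic triangle has insize at
most `δ`, and the Gromov product is `δ`-hyperbolic. -/
structure IsDeltaHyperbolic (X : Type u) [MetricSpace X] (δ : ℝ) : Prop where
  delta_nonneg : 0 ≤ δ
  geodesic : ∀ x y : X, ∃ γ : ℝ → X, IsGeodesicSegment γ x y
  slim : ∀ (x y z : X) (α β γ : ℝ → X),
    IsGeodesicSegment α y z → IsGeodesicSegment β z x → IsGeodesicSegment γ x y →
    ∀ s ∈ Set.Icc (0 : ℝ) (dist y z),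
      (∃ t ∈ Set.Icc (0 : ℝ) (dist z x), dist (α s) (β t) ≤ δ) ∨
      (∃ t ∈ Set.Icc (0 : ℝ) (dist x y), dist (α s) (γ t) ≤ δ)
  insize : ∀ (x y z : X) (α β γ : ℝ → X),
    IsGeodesicSegment α y z → IsGeodesicSegment β z x → IsGeodesicSegment γ x y →
    dist (α (gromovProduct y x z)) (β (gromovProduct z x y)) ≤ δ ∧
    dist (β (gromovProduct z x y)) (γ (gromovProduct x y z)) ≤ δ ∧
    dist (γ (gromovProduct x y z)) (α (gromovProduct y x z)) ≤ δ
  gromov : ∀ w x y z : X,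
    min (gromovProduct w x y) (gromovProduct w y z) - δ ≤ gromovProduct w x z

/-- An isometry `f` of `X` is hyperbolic if for every `x ∈ X` there is `t > 0` with
`t|m − n| ≤ d(f^m x, f^n x)` for all integers `m, n`. -/
def IsHyperbolicIsometry (f : X ≃ᵢ X) : Prop :=
  ∀ x : X, ∃ t : ℝ, 0 < t ∧
    ∀ m n : ℤ, t * |(m : ℝ) - (n : ℝ)| ≤ dist ((f ^ m) x) ((f ^ n) x)

/-- A sequence converges to infinity if the Gromov products `(x_i·x_j)_w → ∞`. -/
def ConvergesToInfinity (w : X) (u : ℕ → X) : Prop :=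
  Tendsto (fun p : ℕ × ℕ => gromovProduct w (u p.1) (u p.2)) atTop atTop

/-- Two sequences are equivalent if the mixed Gromov products tend to infinity. -/
def SeqEquiv (w : X) (u v : ℕ → X) : Prop :=
  Tendsto (fun p : ℕ × ℕ => gromovProduct w (u p.1) (v p.2)) atTop atTop

/-- Sequences converging to infinity. -/
def BoundarySeq (w : X) : Type u := {u : ℕ → X // ConvergesToInfinity w u}

/-- The Gromov boundary `∂X`: equivalence classes of sequences converging to infinity. -/
def GromovBoundary (w : X) : Type u :=
  Quot (fun u v : BoundarySeq w => SeqEquiv w u.1 v.1)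

/-- The boundary point determined by a sequence converging to infinity. -/
def boundaryPt (w : X) (u : BoundarySeq w) : GromovBoundary w := Quot.mk _ u

/-- `X̄ = X ∪ ∂X`. -/
def GromovClosure (w : X) : Type u := X ⊕ GromovBoundary w

theorem gromovProduct_basepoint_ge (w w' x y : X) :
    gromovProduct w x y - dist w w' ≤ gromovProduct w' x y := by
  have h1 : |dist w' x - dist w x| ≤ dist w' w := abs_dist_sub_le w' w x
  have h2 : |dist w' y - dist w y| ≤ dist w' w := abs_dist_sub_le w' w y
  rw [abs_le] at h1 h2
  unfold gromovProduct
  rw [dist_comm x w', dist_comm x w, dist_comm w w']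
  linarith [h1.1, h1.2, h2.1, h2.2]

theorem gromovProduct_isometry (f : X ≃ᵢ X) (w x y : X) :
    gromovProduct w (f x) (f y) = gromovProduct (f.symm w) x y := by
  unfold gromovProduct
  conv_lhs => rw [show w = f (f.symm w) from (f.apply_symm_apply w).symm]
  rw [f.dist_eq, f.dist_eq, f.dist_eq]

theorem convergesToInfinity_isometry {w : X} (f : X ≃ᵢ X) {u : ℕ → X}
    (h : ConvergesToInfinity w u) :
    ConvergesToInfinity w (fun n => f (u n)) := by
  refine tendsto_atTop_mono (fun p => ?_)
    (tendsto_atTop_add_const_right atTop (-dist w (f.symm w)) h)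
  have h1 := gromovProduct_basepoint_ge w (f.symm w) (u p.1) (u p.2)
  have h2 := gromovProduct_isometry f w (u p.1) (u p.2)
  dsimp only
  linarith

theorem seqEquiv_isometry {w : X} (f : X ≃ᵢ X) {u v : ℕ → X}
    (h : SeqEquiv w u v) :
    SeqEquiv w (fun n => f (u n)) (fun n => f (v n)) := by
  refine tendsto_atTop_mono (fun p => ?_)
    (tendsto_atTop_add_const_right atTop (-dist w (f.symm w)) h)
  have h1 := gromovProduct_basepoint_ge w (f.symm w) (u p.1) (v p.2)
  have h2 := gromovProduct_isometry f w (u p.1) (v p.2)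
  dsimp only
  linarith

/-- The extension of an isometry of `X` to the Gromov boundary. -/
def boundaryMap (w : X) (f : X ≃ᵢ X) : GromovBoundary w → GromovBoundary w :=
  Quot.lift
    (fun u : BoundarySeq w =>
      boundaryPt w ⟨fun n => f (u.1 n), convergesToInfinity_isometry f u.2⟩)
    (fun _ _ h => Quot.sound (seqEquiv_isometry f h))

/-- The extension of an isometry of `X` to `X̄ = X ∪ ∂X`. -/
def closureMap (w : X) (f : X ≃ᵢ X) : GromovClosure w → GromovClosure w
  | Sum.inl x => Sum.inl (f x)
  | Sum.inr a => Sum.inr (boundaryMap w f a)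

/-- The Gromov product of a boundary point with a point of `X̄`, extended by
taking infima of liminfs over representative sequences. -/
noncomputable def boundaryGP (w : X) (a : GromovBoundary w) : GromovClosure w → ℝ
  | Sum.inl p => sInf {r : ℝ | ∃ u : BoundarySeq w, boundaryPt w u = a ∧
      r = Filter.liminf (fun n => gromovProduct w (u.1 n) p) atTop}
  | Sum.inr b => sInf {r : ℝ | ∃ u v : BoundarySeq w, boundaryPt w u = a ∧
      boundaryPt w v = b ∧
      r = Filter.liminf (fun n => gromovProduct w (u.1 n) (v.1 n)) atTop}

/-- The basis for the topology on `X̄`: open balls in `X`, and the sets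
`N(â,k) = {y : (â·y)_w > k}` for boundary points `â` and `k > 0`. -/
def closureBasis (w : X) : Set (Set (GromovClosure w)) :=
  {S | (∃ (x : X) (r : ℝ), 0 < r ∧ S = Sum.inl '' Metric.ball x r) ∨
       (∃ (a : GromovBoundary w) (k : ℝ), 0 < k ∧ S = {y | k < boundaryGP w a y})}

/-- The topology on `X̄` generated by the basis above. -/
def closureTop (w : X) : TopologicalSpace (GromovClosure w) :=
  TopologicalSpace.generateFrom (closureBasis w)

/-- `S ⊆ X̄` is a neighborhood of `p ∈ X̄`. -/
def IsNeighborhood (w : X) (S : Set (GromovClosure w)) (p : GromovClosure w) : Prop :=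
  S ∈ @nhds (GromovClosure w) (closureTop w) p

/-- `a ∈ ∂X` is the attracting fixed point of `f`: it is represented by the
sequence `(f^n x)` for a point `x ∈ X`. -/
def IsAttractingFixedPt (w : X) (f : X ≃ᵢ X) (a : GromovBoundary w) : Prop :=
  ∃ (x : X) (h : ConvergesToInfinity w (fun n : ℕ => (f ^ (n : ℤ)) x)),
    boundaryPt w ⟨fun n : ℕ => (f ^ (n : ℤ)) x, h⟩ = a

/-- `a ∈ ∂X` is the repelling fixed point of `f`: the attracting fixed point of `f⁻¹`. -/
def IsRepellingFixedPt (w : X) (f : X ≃ᵢ X) (a : GromovBoundary w) : Prop :=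
  IsAttractingFixedPt w f⁻¹ a

/-- The concatenation `α · (f α)` of a path `α` defined on `[0, L]` with its
image under `f`, parametrized on `[0, 2L]`. -/
noncomputable def concatPath (f : X ≃ᵢ X) (α : ℝ → X) (L : ℝ) : ℝ → X :=
  fun s => if s ≤ L then α s else f (α (s - L))


theorem gromovProduct_symm' (w x y : X) : gromovProduct w x y = gromovProduct w y x := by
  unfold gromovProduct; rw [dist_comm x w, dist_comm w y, dist_comm x y]; ring

theorem gromovProduct_move_left' (w x x' y : X) :
    gromovProduct w x y - dist x x' ≤ gromovProduct w x' y := by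
  unfold gromovProduct
  have h1 : dist x w ≤ dist x x' + dist x' w := dist_triangle x x' w
  have h2 : dist x' y ≤ dist x' x + dist x y := dist_triangle x' x y
  rw [dist_comm x' x] at h2
  linarith

theorem seqEquiv_symm' {w : X} {u v : ℕ → X} (h : SeqEquiv w u v) : SeqEquiv w v u := by
  rw [SeqEquiv, tendsto_atTop_atTop] at h ⊢
  intro b
  obtain ⟨N, hN⟩ := h b
  refine ⟨(N.2, N.1), fun a ha => ?_⟩
  have := hN (a.2, a.1) ⟨ha.2, ha.1⟩
  rw [gromovProduct_symm']
  exact this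

theorem seqEquiv_trans' (δ : ℝ)
    (hG : ∀ w x y z : X, min (gromovProduct w x y) (gromovProduct w y z) - δ ≤ gromovProduct w x z)
    {w : X} {u v x : ℕ → X} (h1 : SeqEquiv w u v) (h2 : SeqEquiv w v x) :
    SeqEquiv w u x := by
  rw [SeqEquiv, tendsto_atTop_atTop] at h1 h2 ⊢
  intro b
  obtain ⟨N1, hN1⟩ := h1 (b + δ)
  obtain ⟨N2, hN2⟩ := h2 (b + δ)
  refine ⟨(N1.1, N2.2), fun a ha => ?_⟩
  set m := max N1.2 N2.1 with hm
  have hu := hN1 (a.1, m) ⟨ha.1, le_max_left _ _⟩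
  have hv := hN2 (m, a.2) ⟨le_max_right _ _, ha.2⟩
  have := hG w (u a.1) (v m) (x a.2)
  have hmin : b + δ ≤ min (gromovProduct w (u a.1) (v m)) (gromovProduct w (v m) (x a.2)) :=
    le_min hu hv
  linarith

theorem seqEquiv_bdd_left' {w : X} {u u' v : ℕ → X} (C : ℝ)
    (hC : ∀ n, dist (u n) (u' n) ≤ C) (h : SeqEquiv w u v) : SeqEquiv w u' v := by
  refine tendsto_atTop_mono (fun q => ?_)
    (tendsto_atTop_add_const_right atTop (-C) h)
  have := gromovProduct_move_left' w (u q.1) (u' q.1) (v q.2)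
  have := hC q.1
  linarith

theorem seqEquiv_bdd_right' {w : X} {u v v' : ℕ → X} (C : ℝ)
    (hC : ∀ n, dist (v n) (v' n) ≤ C) (h : SeqEquiv w u v) : SeqEquiv w u v' :=
  seqEquiv_symm' (seqEquiv_bdd_left' C hC (seqEquiv_symm' h))

theorem seqEquiv_equivalence' (δ : ℝ)
    (hG : ∀ w x y z : X, min (gromovProduct w x y) (gromovProduct w y z) - δ ≤ gromovProduct w x z)
    (w : X) : Equivalence (fun a b : BoundarySeq w => SeqEquiv w a.1 b.1) :=
  ⟨fun a => a.2, fun h => seqEquiv_symm' h, fun h1 h2 => seqEquiv_trans' δ hG h1 h2⟩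

theorem boundaryPt_exact' (δ : ℝ)
    (hG : ∀ w x y z : X, min (gromovProduct w x y) (gromovProduct w y z) - δ ≤ gromovProduct w x z)
    {w : X} {a b : BoundarySeq w} (h : boundaryPt w a = boundaryPt w b) :
    SeqEquiv w a.1 b.1 :=
  ((seqEquiv_equivalence' δ hG w).eqvGen_iff).mp (Quot.eqvGen_exact h)


set_option maxHeartbeats 1000000 in
theorem claim_gp_bound' (δ : ℝ) (hX : IsDeltaHyperbolic X δ) (w : X)
    (f : X ≃ᵢ X) (Aminus : GromovBoundary w) (hAm : IsRepellingFixedPt w f Aminus)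
    (g : X ≃ᵢ X) (p : X) (hp : g p = p)
    (hgA : boundaryMap w g Aminus = Aminus)
    (D : ℝ)
    (hDbd : ∀ k : ℕ, gromovProduct p ((f ^ (-(k : ℤ))) p) ((f ^ (k : ℤ)) p) ≤ D)
    (n : ℤ) : ∃ K : ℕ, ∀ k : ℕ, K ≤ k →
      gromovProduct p ((g ^ n) ((f ^ (-(k : ℤ))) p)) ((f ^ (k : ℤ)) p) ≤ D + δ := by
  have hG := hX.gromov
  obtain ⟨x, hx, hxpt⟩ := hAm
  have hveq : (fun k : ℕ => ((f⁻¹) ^ (k : ℤ)) x) = fun k : ℕ => (f ^ (-(k : ℤ))) x := by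
    funext k; rw [inv_zpow']
  have hx2 : ConvergesToInfinity w (fun k : ℕ => (f ^ (-(k : ℤ))) x) := hveq ▸ hx
  have hSub : (⟨fun k : ℕ => ((f⁻¹) ^ (k : ℤ)) x, hx⟩ : BoundarySeq w)
      = ⟨fun k : ℕ => (f ^ (-(k : ℤ))) x, hx2⟩ := Subtype.ext hveq
  rw [hSub] at hxpt
  have hdvu : ∀ k : ℕ, dist ((f ^ (-(k : ℤ))) x) ((f ^ (-(k : ℤ))) p) ≤ dist x p :=
    fun k => le_of_eq ((f ^ (-(k : ℤ))).dist_eq x p)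
  have hx3 : SeqEquiv w (fun k : ℕ => (f ^ (-(k : ℤ))) x) (fun k : ℕ => (f ^ (-(k : ℤ))) x) :=
    hx2
  have hvu : SeqEquiv w (fun k : ℕ => (f ^ (-(k : ℤ))) x) (fun k : ℕ => (f ^ (-(k : ℤ))) p) :=
    seqEquiv_bdd_right' (dist x p) hdvu hx3
  have hu : ConvergesToInfinity w (fun k : ℕ => (f ^ (-(k : ℤ))) p) := by
    have : SeqEquiv w (fun k : ℕ => (f ^ (-(k : ℤ))) p) (fun k : ℕ => (f ^ (-(k : ℤ))) p) :=
      seqEquiv_bdd_left' (dist x p) hdvu hvu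
    exact this
  have hAu : boundaryPt w ⟨fun k : ℕ => (f ^ (-(k : ℤ))) p, hu⟩ = Aminus := by
    rw [← hxpt]
    exact Quot.sound (r := fun a b : BoundarySeq w => SeqEquiv w a.1 b.1)
      (a := ⟨fun k : ℕ => (f ^ (-(k : ℤ))) p, hu⟩)
      (b := ⟨fun k : ℕ => (f ^ (-(k : ℤ))) x, hx2⟩) (seqEquiv_symm' hvu)
  have hstep : boundaryPt w ⟨fun k : ℕ => g ((f ^ (-(k : ℤ))) p),
      convergesToInfinity_isometry g hu⟩
      = boundaryPt w ⟨fun k : ℕ => (f ^ (-(k : ℤ))) p, hu⟩ := by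
    have h0 : boundaryMap w g (boundaryPt w ⟨fun k : ℕ => (f ^ (-(k : ℤ))) p, hu⟩)
        = boundaryPt w ⟨fun k : ℕ => (f ^ (-(k : ℤ))) p, hu⟩ := by rw [hAu]; exact hgA
    exact h0
  have hg1 : SeqEquiv w (fun k : ℕ => g ((f ^ (-(k : ℤ))) p))
      (fun k : ℕ => (f ^ (-(k : ℤ))) p) := boundaryPt_exact' δ hG hstep
  have hginv : SeqEquiv w (fun k : ℕ => g⁻¹ ((f ^ (-(k : ℤ))) p))
      (fun k : ℕ => (f ^ (-(k : ℤ))) p) := by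
    have h1 := seqEquiv_isometry g⁻¹ hg1
    have h2 : (fun k : ℕ => g⁻¹ (g ((f ^ (-(k : ℤ))) p)))
        = fun k : ℕ => (f ^ (-(k : ℤ))) p := by
      funext k; exact g.inv_apply_self _
    rw [h2] at h1
    exact seqEquiv_symm' h1
  have hgn : ∀ m : ℤ, SeqEquiv w (fun k : ℕ => (g ^ m) ((f ^ (-(k : ℤ))) p))
      (fun k : ℕ => (f ^ (-(k : ℤ))) p) := by
    intro m
    induction m using Int.induction_on with
    | zero => simpa [SeqEquiv, ConvergesToInfinity] using hu
    | succ i ih =>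
        have h1 := seqEquiv_isometry g ih
        have h2 := seqEquiv_trans' δ hG h1 hg1
        have h3 : (fun k : ℕ => g ((g ^ (i : ℤ)) ((f ^ (-(k : ℤ))) p)))
            = fun k : ℕ => (g ^ ((i : ℤ) + 1)) ((f ^ (-(k : ℤ))) p) := by
          funext k
          rw [show (i : ℤ) + 1 = 1 + i by ring, zpow_add, zpow_one, IsometryEquiv.mul_apply]
        rw [h3] at h2
        exact h2
    | pred i ih =>
        have h1 := seqEquiv_isometry g⁻¹ ih
        have h2 := seqEquiv_trans' δ hG h1 hginv
        have h3 : (fun k : ℕ => g⁻¹ ((g ^ (-(i : ℤ))) ((f ^ (-(k : ℤ))) p)))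
            = fun k : ℕ => (g ^ (-(i : ℤ) - 1)) ((f ^ (-(k : ℤ))) p) := by
          funext k
          rw [show (-(i : ℤ) - 1) = (-1) + (-(i : ℤ)) by ring, zpow_add, zpow_neg_one,
            IsometryEquiv.mul_apply]
        rw [h3] at h2
        exact h2
  have hdiag : Tendsto (fun k : ℕ =>
      gromovProduct p ((g ^ n) ((f ^ (-(k : ℤ))) p)) ((f ^ (-(k : ℤ))) p)) atTop atTop := by
    have hd : Tendsto (fun k : ℕ => ((k : ℕ), (k : ℕ))) atTop (atTop : Filter (ℕ × ℕ)) := by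
      rw [← prod_atTop_atTop_eq]
      exact tendsto_id.prodMk tendsto_id
    have h1 := (hgn n).comp hd
    refine tendsto_atTop_mono (fun k => ?_)
      (tendsto_atTop_add_const_right atTop (-(dist w p)) h1)
    have h5 := gromovProduct_basepoint_ge w p ((g ^ n) ((f ^ (-(k : ℤ))) p))
      ((f ^ (-(k : ℤ))) p)
    simp only [Function.comp]
    linarith
  obtain ⟨K, hK⟩ := eventually_atTop.mp (tendsto_atTop.mp hdiag (D + δ + 1))
  refine ⟨K, fun k hk => ?_⟩
  have hbig : D + δ + 1 ≤ gromovProduct p ((g ^ n) ((f ^ (-(k : ℤ))) p))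
      ((f ^ (-(k : ℤ))) p) := hK k hk
  have hmin := hG p ((f ^ (-(k : ℤ))) p) ((g ^ n) ((f ^ (-(k : ℤ))) p)) ((f ^ (k : ℤ)) p)
  have hDk := hDbd k
  have hsym : gromovProduct p ((f ^ (-(k : ℤ))) p) ((g ^ n) ((f ^ (-(k : ℤ))) p))
      = gromovProduct p ((g ^ n) ((f ^ (-(k : ℤ))) p)) ((f ^ (-(k : ℤ))) p) :=
    gromovProduct_symm' _ _ _
  rcases min_cases (gromovProduct p ((f ^ (-(k : ℤ))) p) ((g ^ n) ((f ^ (-(k : ℤ))) p)))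
    (gromovProduct p ((g ^ n) ((f ^ (-(k : ℤ))) p)) ((f ^ (k : ℤ)) p)) with
    ⟨he, _⟩ | ⟨he, _⟩ <;> rw [he] at hmin <;> linarith

/-- Let `f` be hyperbolic with fixed points `A₊`, `A₋`, let `g` fix
a point `p ∈ X` and satisfy `g A₋ = A₋`, and let `D ≥ 0` bound all Gromov
products `(f^{-k}p · f^k p)_p`. Then for every `n ∈ ℤ` there is `Kₙ ≥ 0` such
that `(gⁿ f^{-k} p · f^k p)_p ≤ D + δ` and `(f^{-k} p · gⁿ f^k p)_p ≤ D + δ`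
for all `k ≥ Kₙ`. -/
theorem gromov_product_bound_elliptic (δ : ℝ) (hX : IsDeltaHyperbolic X δ) (w : X)
    (f : X ≃ᵢ X) (hf : IsHyperbolicIsometry f)
    (Aplus Aminus : GromovBoundary w)
    (hAp : IsAttractingFixedPt w f Aplus) (hAm : IsRepellingFixedPt w f Aminus)
    (g : X ≃ᵢ X) (p : X) (hp : g p = p)
    (hgA : boundaryMap w g Aminus = Aminus)
    (D : ℝ) (hD : 0 ≤ D)
    (hDbd : ∀ k : ℕ, gromovProduct p ((f ^ (-(k : ℤ))) p) ((f ^ (k : ℤ)) p) ≤ D) :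
    ∀ n : ℤ, ∃ K : ℕ, ∀ k : ℕ, K ≤ k →
      gromovProduct p ((g ^ n) ((f ^ (-(k : ℤ))) p)) ((f ^ (k : ℤ)) p) ≤ D + δ ∧
      gromovProduct p ((f ^ (-(k : ℤ))) p) ((g ^ n) ((f ^ (k : ℤ)) p)) ≤ D + δ := by
  intro n
  obtain ⟨K1, h1⟩ := claim_gp_bound' δ hX w f Aminus hAm g p hp hgA D hDbd n
  obtain ⟨K2, h2⟩ := claim_gp_bound' δ hX w f Aminus hAm g p hp hgA D hDbd (-n)
  have hpfix : ∀ m : ℤ, (g ^ m) p = p := by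
    intro m
    induction m using Int.induction_on with
    | zero => simp
    | succ i ih =>
        rw [show (i : ℤ) + 1 = 1 + i by ring, zpow_add, zpow_one,
          IsometryEquiv.mul_apply, ih, hp]
    | pred i ih =>
        rw [show (-(i : ℤ) - 1) = (-1) + (-(i : ℤ)) by ring, zpow_add, zpow_neg_one,
          IsometryEquiv.mul_apply, ih]
        rw [← hp, IsometryEquiv.inv_apply_self]
        exact hp.symm
  have e0 : ((g ^ (-n) : X ≃ᵢ X)).symm = g ^ n := by
    rw [zpow_neg]
    exact IsometryEquiv.symm_symm (g ^ n)
  refine ⟨max K1 K2, fun k hk => ⟨h1 k (le_trans (le_max_left _ _) hk), ?_⟩⟩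
  have h3 := gromovProduct_isometry (g ^ (-n)) p ((f ^ (-(k : ℤ))) p)
    ((g ^ n) ((f ^ (k : ℤ)) p))
  rw [e0, hpfix n] at h3
  have h4 : (g ^ (-n)) ((g ^ n) ((f ^ (k : ℤ)) p)) = (f ^ (k : ℤ)) p := by
    rw [zpow_neg]
    exact IsometryEquiv.inv_apply_self _ _
  rw [h4] at h3
  rw [← h3]
  exact h2 k (le_trans (le_max_right _ _) hk)
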